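/- Let G=(V,E) be a finite simple graph with edge weights w : E → ℝ_{≥0} and b : V → ℤ with b_i ≥ 1 for all i. Consider the dual b-matching LP: minimize ∑_i b_i x_i + ∑_{U∈𝒪} ⌊‖U‖_b/2⌋ z_U over x : V → ℝ_{≥0} and z : 𝒪 → ℝ_{≥0} subject to x_i + x_j + ∑_{U∈𝒪: i,j∈U} z_U ≥ w_{ij} for every edge (i,j) ∈ E. Then there exists a feasible pair (x,z) attaining the minimum of this LP such that the family L = {U ∈ 𝒪 : z_U > 0} is laminar, i.e., any two sets A,B ∈ L satisfy A ⊆ B, B ⊆ A, or A ∩ B = ∅. -/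

import Mathlib

open Finset
open scoped Classical

/-- Feasibility for the dual `b`-matching LP: `x ≥ 0`, `z ≥ 0`, `z` supported on odd
sets, and `x_i + x_j + ∑_{U∈𝒪: i,j∈U} z_U ≥ w_{ij}` for every edge `(i,j)`. -/
def DualBMatchFeasible {V : Type*} [Fintype V] [DecidableEq V]
    (G : SimpleGraph V) (w : Sym2 V → ℝ) (b : V → ℤ)
    (x : V → ℝ) (z : Finset V → ℝ) : Prop :=
  (∀ i, 0 ≤ x i) ∧ (∀ U, 0 ≤ z U) ∧
  (∀ U : Finset V, ¬ Odd (∑ i ∈ U, b i) → z U = 0) ∧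
  (∀ i j : V, G.Adj i j →
    x i + x j +
      ∑ U ∈ (univ : Finset (Finset V)).filter
        (fun U => Odd (∑ v ∈ U, b v) ∧ i ∈ U ∧ j ∈ U), z U ≥ w s(i, j))

/-- The dual objective `∑_i b_i x_i + ∑_{U∈𝒪} ⌊‖U‖_b/2⌋ z_U`. -/
def DualBMatchObj {V : Type*} [Fintype V] [DecidableEq V]
    (b : V → ℤ) (x : V → ℝ) (z : Finset V → ℝ) : ℝ :=
  ∑ i, (b i : ℝ) * x i +
    ∑ U ∈ (univ : Finset (Finset V)).filter (fun U => Odd (∑ i ∈ U, b i)),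
      (((∑ i ∈ U, b i) / 2 : ℤ) : ℝ) * z U

section DualBMatchAux

variable {V : Type*} [Fintype V] [DecidableEq V]

lemma dbm_perturb (G : SimpleGraph V) (w : Sym2 V → ℝ) (b : V → ℤ)
    (x : V → ℝ) (z : Finset V → ℝ)
    (hfeas : DualBMatchFeasible G w b x z)
    (A B C D S : Finset V) (ε : ℝ) (hε : 0 < ε) (hεA : ε ≤ z A) (hεB : ε ≤ z B)
    (hAB : A ≠ B) (hAC : A ≠ C) (hAD : A ≠ D) (hBC : B ≠ C) (hBD : B ≠ D)
    (hCodd : Odd (∑ i ∈ C, b i)) (hDodd : Odd (∑ i ∈ D, b i))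
    (hH1 : ∀ i j : V, G.Adj i j →
      (if i ∈ A ∧ j ∈ A then (1:ℝ) else 0) + (if i ∈ B ∧ j ∈ B then 1 else 0) ≤
      (if i ∈ C ∧ j ∈ C then 1 else 0) + (if i ∈ D ∧ j ∈ D then 1 else 0) +
      (if i ∈ S then 1 else 0) + (if j ∈ S then 1 else 0))
    (hH2 : ∑ v ∈ S, b v + (∑ i ∈ C, b i) / 2 + (∑ i ∈ D, b i) / 2
        = (∑ i ∈ A, b i) / 2 + (∑ i ∈ B, b i) / 2) :
    DualBMatchFeasible G w b
      (fun v => x v + ε * (if v ∈ S then 1 else 0))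
      (fun U => z U + ε * ((if U = C then 1 else 0) + (if U = D then 1 else 0)
        - (if U = A then 1 else 0) - (if U = B then 1 else 0))) ∧
    DualBMatchObj b
      (fun v => x v + ε * (if v ∈ S then 1 else 0))
      (fun U => z U + ε * ((if U = C then 1 else 0) + (if U = D then 1 else 0)
        - (if U = A then 1 else 0) - (if U = B then 1 else 0)))
      = DualBMatchObj b x z ∧
    (∑ i, (b i : ℝ) * (x i + ε * (if i ∈ S then 1 else 0)))
      = (∑ i, (b i : ℝ) * x i) + ε * (∑ v ∈ S, (b v : ℝ)) ∧
    (∑ U : Finset V, ((U.card : ℝ)^2 - 1) * (z U + ε * ((if U = C then 1 else 0) + (if U = D then 1 else 0)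
        - (if U = A then 1 else 0) - (if U = B then 1 else 0))))
      = (∑ U : Finset V, ((U.card : ℝ)^2 - 1) * z U)
        + ε * (((C.card : ℝ)^2 - 1) + ((D.card : ℝ)^2 - 1) - ((A.card : ℝ)^2 - 1) - ((B.card : ℝ)^2 - 1)) := by
  obtain ⟨hx0, hz0, hzodd, hcon⟩ := hfeas
  have hAodd : Odd (∑ i ∈ A, b i) := by
    by_contra h; have := hzodd A h; linarith
  have hBodd : Odd (∑ i ∈ B, b i) := by
    by_contra h; have := hzodd B h; linarith
  -- generic sum expansion over a finset of finsets
  have expand : ∀ (F : Finset (Finset V)) (c : Finset V → ℝ),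
      ∑ U ∈ F, c U * (z U + ε * ((if U = C then 1 else 0) + (if U = D then 1 else 0)
        - (if U = A then 1 else 0) - (if U = B then 1 else 0)))
      = (∑ U ∈ F, c U * z U) + ε *
        ((if C ∈ F then c C else 0) + (if D ∈ F then c D else 0)
          - (if A ∈ F then c A else 0) - (if B ∈ F then c B else 0)) := by
    intro F c
    have h1 : ∀ X : Finset V, ∑ U ∈ F, c U * (if U = X then (1:ℝ) else 0)
        = if X ∈ F then c X else 0 := by
      intro X
      simp only [mul_ite, mul_one, mul_zero]
      exact Finset.sum_ite_eq' F X c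
    calc ∑ U ∈ F, c U * (z U + ε * _)
        = ∑ U ∈ F, (c U * z U + ε * (c U * (if U = C then (1:ℝ) else 0)
            + c U * (if U = D then 1 else 0) - c U * (if U = A then 1 else 0)
            - c U * (if U = B then 1 else 0))) := by
          apply Finset.sum_congr rfl; intro U _; ring
      _ = _ := by
          rw [Finset.sum_add_distrib, ← Finset.mul_sum]
          simp only [Finset.sum_sub_distrib, Finset.sum_add_distrib, h1]
  have hx0' : ∀ v, 0 ≤ x v + ε * (if v ∈ S then 1 else 0) := by
    intro v; have := hx0 v; split_ifs <;> linarith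
  have hz0' : ∀ U, 0 ≤ z U + ε * ((if U = C then (1:ℝ) else 0) + (if U = D then 1 else 0)
        - (if U = A then 1 else 0) - (if U = B then 1 else 0)) := by
    intro U
    by_cases hUA : U = A
    · subst hUA; rw [if_neg hAC, if_neg hAD, if_pos rfl, if_neg hAB]; linarith
    · by_cases hUB : U = B
      · subst hUB; rw [if_neg hBC, if_neg hBD, if_neg (Ne.symm hAB), if_pos rfl]; linarith
      · have := hz0 U
        simp only [if_neg hUA, if_neg hUB]
        split_ifs <;> linarith
  have hzodd' : ∀ U : Finset V, ¬ Odd (∑ i ∈ U, b i) →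
      z U + ε * ((if U = C then (1:ℝ) else 0) + (if U = D then 1 else 0)
        - (if U = A then 1 else 0) - (if U = B then 1 else 0)) = 0 := by
    intro U hU
    have hUA : U ≠ A := fun h => hU (h ▸ hAodd)
    have hUB : U ≠ B := fun h => hU (h ▸ hBodd)
    have hUC : U ≠ C := fun h => hU (h ▸ hCodd)
    have hUD : U ≠ D := fun h => hU (h ▸ hDodd)
    simp [if_neg hUA, if_neg hUB, if_neg hUC, if_neg hUD, hzodd U hU]
  refine ⟨⟨hx0', hz0', hzodd', ?_⟩, ?_, ?_, ?_⟩
  · -- constraints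
    intro i j hadj
    have hold := hcon i j hadj
    have hkey := expand ((univ : Finset (Finset V)).filter
        (fun U => Odd (∑ v ∈ U, b v) ∧ i ∈ U ∧ j ∈ U)) (fun _ => (1:ℝ))
    simp only [one_mul] at hkey
    have hmem : ∀ X : Finset V, Odd (∑ v ∈ X, b v) →
        ((if X ∈ (univ : Finset (Finset V)).filter
          (fun U => Odd (∑ v ∈ U, b v) ∧ i ∈ U ∧ j ∈ U) then (1:ℝ) else 0)
          = if i ∈ X ∧ j ∈ X then 1 else 0) := by
      intro X hX
      simp only [Finset.mem_filter, Finset.mem_univ, true_and]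
      by_cases h : i ∈ X ∧ j ∈ X
      · rw [if_pos ⟨hX, h⟩, if_pos h]
      · rw [if_neg (fun hh => h hh.2), if_neg h]
    rw [hmem A hAodd, hmem B hBodd, hmem C hCodd, hmem D hDodd] at hkey
    have hineq := hH1 i j hadj
    have hΔ : (0:ℝ) ≤ (if i ∈ C ∧ j ∈ C then (1:ℝ) else 0) + (if i ∈ D ∧ j ∈ D then 1 else 0)
        + (if i ∈ S then 1 else 0) + (if j ∈ S then 1 else 0)
        - (if i ∈ A ∧ j ∈ A then 1 else 0) - (if i ∈ B ∧ j ∈ B then 1 else 0) := by linarith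
    simp only [ge_iff_le] at hold ⊢
    rw [hkey]
    linarith [mul_nonneg hε.le hΔ]
  · -- objective unchanged
    unfold DualBMatchObj
    have e1 : ∑ i, (b i : ℝ) * (x i + ε * (if i ∈ S then 1 else 0))
        = (∑ i, (b i : ℝ) * x i) + ε * (∑ v ∈ S, (b v : ℝ)) := by
      have : ∑ i, (b i : ℝ) * (x i + ε * (if i ∈ S then 1 else 0))
          = ∑ i, ((b i : ℝ) * x i + ε * ((b i : ℝ) * (if i ∈ S then 1 else 0))) := by
        apply Finset.sum_congr rfl; intro i _; ring
      rw [this, Finset.sum_add_distrib, ← Finset.mul_sum]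
      congr 1
      simp [mul_ite, mul_one, mul_zero, Finset.sum_ite_mem]
    rw [e1, expand]
    have hAm : A ∈ (univ : Finset (Finset V)).filter (fun U => Odd (∑ i ∈ U, b i)) := by
      simp [hAodd]
    have hBm : B ∈ (univ : Finset (Finset V)).filter (fun U => Odd (∑ i ∈ U, b i)) := by
      simp [hBodd]
    have hCm : C ∈ (univ : Finset (Finset V)).filter (fun U => Odd (∑ i ∈ U, b i)) := by
      simp [hCodd]
    have hDm : D ∈ (univ : Finset (Finset V)).filter (fun U => Odd (∑ i ∈ U, b i)) := by
      simp [hDodd]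
    rw [if_pos hAm, if_pos hBm, if_pos hCm, if_pos hDm]
    have hcast : (∑ v ∈ S, (b v : ℝ)) + ((((∑ i ∈ C, b i) / 2 : ℤ) : ℝ)
        + (((∑ i ∈ D, b i) / 2 : ℤ) : ℝ) - (((∑ i ∈ A, b i) / 2 : ℤ) : ℝ)
        - (((∑ i ∈ B, b i) / 2 : ℤ) : ℝ)) = 0 := by
      have : ((∑ v ∈ S, b v + (∑ i ∈ C, b i) / 2 + (∑ i ∈ D, b i) / 2
          - ((∑ i ∈ A, b i) / 2 + (∑ i ∈ B, b i) / 2) : ℤ) : ℝ) = 0 := by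
        rw [hH2]; simp
      push_cast at this
      linarith
    have h2 : ε * ((∑ v ∈ S, (b v : ℝ)) + ((((∑ i ∈ C, b i) / 2 : ℤ) : ℝ)
        + (((∑ i ∈ D, b i) / 2 : ℤ) : ℝ) - (((∑ i ∈ A, b i) / 2 : ℤ) : ℝ)
        - (((∑ i ∈ B, b i) / 2 : ℤ) : ℝ))) = 0 := by rw [hcast, mul_zero]
    nlinarith [h2]
  · -- f1
    have : ∑ i, (b i : ℝ) * (x i + ε * (if i ∈ S then 1 else 0))
        = ∑ i, ((b i : ℝ) * x i + ε * ((b i : ℝ) * (if i ∈ S then 1 else 0))) := by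
      apply Finset.sum_congr rfl; intro i _; ring
    rw [this, Finset.sum_add_distrib, ← Finset.mul_sum]
    congr 1
    simp [mul_ite, mul_one, mul_zero, Finset.sum_ite_mem]
  · -- f2
    rw [expand Finset.univ (fun U => ((U.card : ℝ)^2 - 1))]
    simp

lemma dbm_proj (G : SimpleGraph V) (w : Sym2 V → ℝ) (b : V → ℤ) (hb : ∀ i, 1 ≤ b i)
    (x : V → ℝ) (z : Finset V → ℝ) (hfeas : DualBMatchFeasible G w b x z) :
    DualBMatchFeasible G w b x (fun U => if (∑ i ∈ U, b i) = 1 then 0 else z U) ∧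
    DualBMatchObj b x (fun U => if (∑ i ∈ U, b i) = 1 then 0 else z U)
      = DualBMatchObj b x z := by
  obtain ⟨hx0, hz0, hzodd, hcon⟩ := hfeas
  refine ⟨⟨hx0, ?_, ?_, ?_⟩, ?_⟩
  · intro U; dsimp only; split_ifs
    · exact le_rfl
    · exact hz0 U
  · intro U hU; dsimp only; split_ifs
    · rfl
    · exact hzodd U hU
  · intro i j hadj
    have h := hcon i j hadj
    have hsum : ∑ U ∈ (univ : Finset (Finset V)).filter
        (fun U => Odd (∑ v ∈ U, b v) ∧ i ∈ U ∧ j ∈ U),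
        (if (∑ i ∈ U, b i) = 1 then (0:ℝ) else z U)
        = ∑ U ∈ (univ : Finset (Finset V)).filter
        (fun U => Odd (∑ v ∈ U, b v) ∧ i ∈ U ∧ j ∈ U), z U := by
      apply Finset.sum_congr rfl
      intro U hU
      simp only [Finset.mem_filter, Finset.mem_univ, true_and] at hU
      have hij : ({i, j} : Finset V) ⊆ U := by
        intro v hv; simp only [Finset.mem_insert, Finset.mem_singleton] at hv
        rcases hv with rfl | rfl
        · exact hU.2.1
        · exact hU.2.2
      have h2 : (2:ℤ) ≤ ∑ i ∈ U, b i := by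
        calc (2:ℤ) = ∑ v ∈ ({i, j} : Finset V), 1 := by
              rw [Finset.sum_const, Finset.card_pair hadj.ne]; ring
          _ ≤ ∑ v ∈ ({i, j} : Finset V), b v := Finset.sum_le_sum (fun v _ => hb v)
          _ ≤ ∑ i ∈ U, b i := Finset.sum_le_sum_of_subset_of_nonneg hij
              (fun v _ _ => le_trans zero_le_one (hb v))
      rw [if_neg (by omega)]
    rw [hsum]; exact h
  · unfold DualBMatchObj
    congr 1
    apply Finset.sum_congr rfl
    intro U _
    dsimp only
    by_cases h1 : (∑ i ∈ U, b i) = 1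
    · rw [if_pos h1, h1]; norm_num
    · rw [if_neg h1]

lemma dbm_cont_obj (b : V → ℤ) :
    Continuous (fun p : (V → ℝ) × (Finset V → ℝ) => DualBMatchObj b p.1 p.2) := by
  unfold DualBMatchObj
  apply Continuous.add
  · exact continuous_finset_sum _ fun i _ =>
      continuous_const.mul ((continuous_apply i).comp continuous_fst)
  · exact continuous_finset_sum _ fun U _ =>
      continuous_const.mul ((continuous_apply U).comp continuous_snd)

lemma dbm_cont_f1 (b : V → ℤ) :
    Continuous (fun p : (V → ℝ) × (Finset V → ℝ) => ∑ i, (b i : ℝ) * p.1 i) :=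
  continuous_finset_sum _ fun i _ =>
    continuous_const.mul ((continuous_apply i).comp continuous_fst)

lemma dbm_cont_f2 :
    Continuous (fun p : (V → ℝ) × (Finset V → ℝ) =>
      ∑ U : Finset V, ((U.card : ℝ)^2 - 1) * p.2 U) :=
  continuous_finset_sum _ fun U _ =>
    continuous_const.mul ((continuous_apply U).comp continuous_snd)

lemma dbm_proj_f2 (b : V → ℤ) (hb : ∀ i, 1 ≤ b i) (z : Finset V → ℝ) :
    (∑ U : Finset V, ((U.card : ℝ)^2 - 1) * (if (∑ i ∈ U, b i) = 1 then 0 else z U))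
      = ∑ U : Finset V, ((U.card : ℝ)^2 - 1) * z U := by
  apply Finset.sum_congr rfl
  intro U _
  by_cases h : (∑ i ∈ U, b i) = 1
  · rw [if_pos h]
    have hne : U.Nonempty := by
      rcases U.eq_empty_or_nonempty with rfl | h'
      · simp at h
      · exact h'
    have hle : (U.card : ℤ) ≤ ∑ i ∈ U, b i := by
      calc (U.card : ℤ) = ∑ _i ∈ U, (1:ℤ) := by simp
        _ ≤ ∑ i ∈ U, b i := Finset.sum_le_sum fun i _ => hb i
    have hpos : 1 ≤ U.card := Finset.card_pos.2 hne
    have hcard : U.card = 1 := by omega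
    rw [hcard]
    norm_num
  · rw [if_neg h]

lemma dbm_good_closed (G : SimpleGraph V) (w : Sym2 V → ℝ) (b : V → ℤ) :
    IsClosed {p : (V → ℝ) × (Finset V → ℝ) |
      DualBMatchFeasible G w b p.1 p.2 ∧ ∀ U : Finset V, (∑ i ∈ U, b i) = 1 → p.2 U = 0} := by
  have hx : ∀ i : V, Continuous (fun p : (V → ℝ) × (Finset V → ℝ) => p.1 i) :=
    fun i => (continuous_apply i).comp continuous_fst
  have hz : ∀ U : Finset V, Continuous (fun p : (V → ℝ) × (Finset V → ℝ) => p.2 U) :=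
    fun U => (continuous_apply U).comp continuous_snd
  have hset : {p : (V → ℝ) × (Finset V → ℝ) |
      DualBMatchFeasible G w b p.1 p.2 ∧ ∀ U : Finset V, (∑ i ∈ U, b i) = 1 → p.2 U = 0}
      = (⋂ i : V, {p | 0 ≤ p.1 i}) ∩ (⋂ U : Finset V, {p | 0 ≤ p.2 U})
        ∩ (⋂ U : Finset V, {p | ¬ Odd (∑ i ∈ U, b i) → p.2 U = 0})
        ∩ (⋂ i : V, ⋂ j : V, {p | G.Adj i j → w s(i,j) ≤ p.1 i + p.1 j +
            ∑ U ∈ (univ : Finset (Finset V)).filter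
              (fun U => Odd (∑ v ∈ U, b v) ∧ i ∈ U ∧ j ∈ U), p.2 U})
        ∩ (⋂ U : Finset V, {p | (∑ i ∈ U, b i) = 1 → p.2 U = 0}) := by
    ext p
    simp only [Set.mem_inter_iff, Set.mem_iInter, Set.mem_setOf_eq, DualBMatchFeasible,
      ge_iff_le]
    tauto
  rw [hset]
  refine IsClosed.inter (IsClosed.inter (IsClosed.inter (IsClosed.inter ?_ ?_) ?_) ?_) ?_
  · exact isClosed_iInter fun i => isClosed_le continuous_const (hx i)
  · exact isClosed_iInter fun U => isClosed_le continuous_const (hz U)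
  · refine isClosed_iInter fun U => ?_
    by_cases h : Odd (∑ i ∈ U, b i)
    · have : {p : (V → ℝ) × (Finset V → ℝ) | ¬ Odd (∑ i ∈ U, b i) → p.2 U = 0}
          = Set.univ := by ext p; simp [h]
      rw [this]; exact isClosed_univ
    · have : {p : (V → ℝ) × (Finset V → ℝ) | ¬ Odd (∑ i ∈ U, b i) → p.2 U = 0}
          = {p | p.2 U = 0} := by ext p; simp [h]
      rw [this]; exact isClosed_eq (hz U) continuous_const
  · refine isClosed_iInter fun i => isClosed_iInter fun j => ?_
    by_cases h : G.Adj i j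
    · have : {p : (V → ℝ) × (Finset V → ℝ) | G.Adj i j → w s(i,j) ≤ p.1 i + p.1 j +
            ∑ U ∈ (univ : Finset (Finset V)).filter
              (fun U => Odd (∑ v ∈ U, b v) ∧ i ∈ U ∧ j ∈ U), p.2 U}
          = {p | w s(i,j) ≤ p.1 i + p.1 j +
            ∑ U ∈ (univ : Finset (Finset V)).filter
              (fun U => Odd (∑ v ∈ U, b v) ∧ i ∈ U ∧ j ∈ U), p.2 U} := by
        ext p; simp [h]
      rw [this]
      exact isClosed_le continuous_const
        (((hx i).add (hx j)).add (continuous_finset_sum _ fun U _ => hz U))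
    · have : {p : (V → ℝ) × (Finset V → ℝ) | G.Adj i j → w s(i,j) ≤ p.1 i + p.1 j +
            ∑ U ∈ (univ : Finset (Finset V)).filter
              (fun U => Odd (∑ v ∈ U, b v) ∧ i ∈ U ∧ j ∈ U), p.2 U}
          = Set.univ := by ext p; simp [h]
      rw [this]; exact isClosed_univ
  · refine isClosed_iInter fun U => ?_
    by_cases h : (∑ i ∈ U, b i) = 1
    · have : {p : (V → ℝ) × (Finset V → ℝ) | (∑ i ∈ U, b i) = 1 → p.2 U = 0}
          = {p | p.2 U = 0} := by ext p; simp [h]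
      rw [this]; exact isClosed_eq (hz U) continuous_const
    · have : {p : (V → ℝ) × (Finset V → ℝ) | (∑ i ∈ U, b i) = 1 → p.2 U = 0}
          = Set.univ := by ext p; simp [h]
      rw [this]; exact isClosed_univ

lemma dbm_bound (b : V → ℤ) (hb : ∀ i, 1 ≤ b i) (x : V → ℝ) (z : Finset V → ℝ)
    (hx0 : ∀ i, 0 ≤ x i) (hz0 : ∀ U, 0 ≤ z U)
    (hzodd : ∀ U : Finset V, ¬ Odd (∑ i ∈ U, b i) → z U = 0)
    (hcheap : ∀ U : Finset V, (∑ i ∈ U, b i) = 1 → z U = 0) :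
    0 ≤ DualBMatchObj b x z ∧ (∀ i, x i ≤ DualBMatchObj b x z) ∧
      (∀ U, z U ≤ DualBMatchObj b x z) := by
  have hbR : ∀ i, (1:ℝ) ≤ (b i : ℝ) := fun i => by exact_mod_cast hb i
  have hT1 : ∀ i ∈ (univ : Finset V), 0 ≤ (b i : ℝ) * x i :=
    fun i _ => mul_nonneg (by linarith [hbR i]) (hx0 i)
  have hcoef : ∀ U ∈ (univ : Finset (Finset V)).filter (fun U => Odd (∑ i ∈ U, b i)),
      (0:ℝ) ≤ (((∑ i ∈ U, b i) / 2 : ℤ) : ℝ) := by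
    intro U _
    have h0 : (0:ℤ) ≤ ∑ i ∈ U, b i :=
      Finset.sum_nonneg fun i _ => le_trans zero_le_one (hb i)
    exact_mod_cast Int.ediv_nonneg h0 (by norm_num)
  have hT2 : ∀ U ∈ (univ : Finset (Finset V)).filter (fun U => Odd (∑ i ∈ U, b i)),
      0 ≤ (((∑ i ∈ U, b i) / 2 : ℤ) : ℝ) * z U :=
    fun U hU => mul_nonneg (hcoef U hU) (hz0 U)
  have h10 : 0 ≤ ∑ i, (b i : ℝ) * x i := Finset.sum_nonneg hT1
  have h20 : 0 ≤ ∑ U ∈ (univ : Finset (Finset V)).filter (fun U => Odd (∑ i ∈ U, b i)),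
      (((∑ i ∈ U, b i) / 2 : ℤ) : ℝ) * z U := Finset.sum_nonneg hT2
  unfold DualBMatchObj
  refine ⟨by linarith, ?_, ?_⟩
  · intro i
    have h1 : x i ≤ (b i : ℝ) * x i := le_mul_of_one_le_left (hx0 i) (hbR i)
    have h2 : (b i : ℝ) * x i ≤ ∑ i, (b i : ℝ) * x i :=
      Finset.single_le_sum hT1 (Finset.mem_univ i)
    linarith
  · intro U
    by_cases hodd : Odd (∑ i ∈ U, b i)
    · by_cases h1 : (∑ i ∈ U, b i) = 1
      · rw [hcheap U h1]; linarith
      · have h0 : (0:ℤ) ≤ ∑ i ∈ U, b i :=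
          Finset.sum_nonneg fun i _ => le_trans zero_le_one (hb i)
        have ho := Int.odd_iff.1 hodd
        have hge : 1 ≤ (∑ i ∈ U, b i) / 2 := by omega
        have hcoefR : (1:ℝ) ≤ (((∑ i ∈ U, b i) / 2 : ℤ) : ℝ) := by exact_mod_cast hge
        have hmem : U ∈ (univ : Finset (Finset V)).filter
            (fun U => Odd (∑ i ∈ U, b i)) := by simp [hodd]
        have h2 : (((∑ i ∈ U, b i) / 2 : ℤ) : ℝ) * z U
            ≤ ∑ W ∈ (univ : Finset (Finset V)).filter (fun U => Odd (∑ i ∈ U, b i)),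
              (((∑ i ∈ W, b i) / 2 : ℤ) : ℝ) * z W :=
          Finset.single_le_sum hT2 hmem
        have h3 : z U ≤ (((∑ i ∈ U, b i) / 2 : ℤ) : ℝ) * z U :=
          le_mul_of_one_le_left (hz0 U) hcoefR
        linarith
    · rw [hzodd U hodd]; linarith


end DualBMatchAux

/-- the dual `b`-matching LP has an optimal solution whose support
`L = {U : z_U > 0}` is a laminar family. -/
theorem dual_bmatching_laminar_optimum
    {V : Type*} [Fintype V] [DecidableEq V]
    (G : SimpleGraph V) [DecidableRel G.Adj]
    (w : Sym2 V → ℝ) (hw : ∀ e ∈ G.edgeFinset, 0 ≤ w e)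
    (b : V → ℤ) (hb : ∀ i, 1 ≤ b i) :
    ∃ (x : V → ℝ) (z : Finset V → ℝ),
      DualBMatchFeasible G w b x z ∧
      (∀ x' z', DualBMatchFeasible G w b x' z' →
        DualBMatchObj b x z ≤ DualBMatchObj b x' z') ∧
      (∀ A B : Finset V, 0 < z A → 0 < z B → A ⊆ B ∨ B ⊆ A ∨ A ∩ B = ∅) := by
  classical
  set P := (V → ℝ) × (Finset V → ℝ)
  set M : ℝ := ∑ e ∈ G.edgeFinset, |w e| with hMdef
  have hM0 : 0 ≤ M := Finset.sum_nonneg fun _ _ => abs_nonneg _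
  have hMw : ∀ i j, G.Adj i j → w s(i,j) ≤ M := by
    intro i j h
    refine le_trans (le_abs_self _) (Finset.single_le_sum (f := fun e => |w e|) (fun _ _ => abs_nonneg _) ?_)
    rw [SimpleGraph.mem_edgeFinset, SimpleGraph.mem_edgeSet]
    exact h
  set p0 : P := (fun _ => M, fun _ => 0) with hp0def
  have hp0feas : DualBMatchFeasible G w b p0.1 p0.2 := by
    refine ⟨fun i => hM0, fun U => le_rfl, fun U _ => rfl, ?_⟩
    intro i j h
    simp only [hp0def, Finset.sum_const, smul_zero]
    have := hMw i j h
    linarith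
  have hp0good : ∀ U : Finset V, (∑ i ∈ U, b i) = 1 → p0.2 U = 0 := fun _ _ => rfl
  set C0 : ℝ := DualBMatchObj b p0.1 p0.2 with hC0def
  set S : Set P := {p : P | (DualBMatchFeasible G w b p.1 p.2 ∧
      ∀ U : Finset V, (∑ i ∈ U, b i) = 1 → p.2 U = 0) ∧
      DualBMatchObj b p.1 p.2 ≤ C0} with hSdef
  have hSclosed : IsClosed S := by
    refine IsClosed.inter (dbm_good_closed G w b) ?_
    exact isClosed_le (dbm_cont_obj b) continuous_const
  have hbound : ∀ p : P, (DualBMatchFeasible G w b p.1 p.2 ∧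
      ∀ U : Finset V, (∑ i ∈ U, b i) = 1 → p.2 U = 0) →
      0 ≤ DualBMatchObj b p.1 p.2 ∧ (∀ i, p.1 i ≤ DualBMatchObj b p.1 p.2) ∧
        (∀ U, p.2 U ≤ DualBMatchObj b p.1 p.2) :=
    fun p hp => dbm_bound b hb p.1 p.2 hp.1.1 hp.1.2.1 hp.1.2.2.1 hp.2
  have hSsub : S ⊆ Set.Icc ((fun _ => 0, fun _ => 0) : P) ((fun _ => C0, fun _ => C0) : P) := by
    intro p hp
    obtain ⟨hpg, hpC⟩ := hp
    obtain ⟨h0, hxb, hzb⟩ := hbound p hpg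
    constructor
    · exact ⟨fun i => hpg.1.1 i, fun U => hpg.1.2.1 U⟩
    · exact ⟨fun i => le_trans (hxb i) hpC, fun U => le_trans (hzb U) hpC⟩
  have hScompact : IsCompact S :=
    IsCompact.of_isClosed_subset isCompact_Icc hSclosed hSsub
  have hp0S : p0 ∈ S := ⟨⟨hp0feas, hp0good⟩, le_rfl⟩
  obtain ⟨pm, hpmS, hpmmin⟩ := hScompact.exists_isMinOn ⟨p0, hp0S⟩
    ((dbm_cont_obj b).continuousOn)
  set m : ℝ := DualBMatchObj b pm.1 pm.2 with hmdef
  have hmC0 : m ≤ C0 := isMinOn_iff.1 hpmmin p0 hp0S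
  have hminGood : ∀ p : P, (DualBMatchFeasible G w b p.1 p.2 ∧
      ∀ U : Finset V, (∑ i ∈ U, b i) = 1 → p.2 U = 0) → m ≤ DualBMatchObj b p.1 p.2 := by
    intro p hp
    by_cases h : DualBMatchObj b p.1 p.2 ≤ C0
    · exact isMinOn_iff.1 hpmmin p ⟨hp, h⟩
    · linarith
  have hminAll : ∀ (x' : V → ℝ) (z' : Finset V → ℝ), DualBMatchFeasible G w b x' z' →
      m ≤ DualBMatchObj b x' z' := by
    intro x' z' h
    obtain ⟨hfeas', hobj'⟩ := dbm_proj G w b hb x' z' h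
    have := hminGood (x', fun U => if (∑ i ∈ U, b i) = 1 then 0 else z' U)
      ⟨hfeas', fun U hU => by simp [hU]⟩
    rw [hobj'] at this
    exact this
  -- the optimal face, then maximize F1, then F2
  set O : Set P := {p : P | (DualBMatchFeasible G w b p.1 p.2 ∧
      ∀ U : Finset V, (∑ i ∈ U, b i) = 1 → p.2 U = 0) ∧
      DualBMatchObj b p.1 p.2 = m} with hOdef
  have hOclosed : IsClosed O :=
    IsClosed.inter (dbm_good_closed G w b) (isClosed_eq (dbm_cont_obj b) continuous_const)
  have hOsub : O ⊆ S := fun p hp => ⟨hp.1, hp.2.le.trans hmC0⟩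
  have hOcompact : IsCompact O := IsCompact.of_isClosed_subset hScompact hOclosed hOsub
  have hpmO : pm ∈ O := ⟨hpmS.1, rfl⟩
  obtain ⟨q1, hq1O, hq1max⟩ := hOcompact.exists_isMaxOn ⟨pm, hpmO⟩
    ((dbm_cont_f1 b).continuousOn)
  set O1 : Set P := {p : P | p ∈ O ∧
      (∑ i, (b i : ℝ) * p.1 i) = ∑ i, (b i : ℝ) * q1.1 i} with hO1def
  have hO1closed : IsClosed O1 :=
    IsClosed.inter hOclosed (isClosed_eq (dbm_cont_f1 b) continuous_const)
  have hO1compact : IsCompact O1 :=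
    IsCompact.of_isClosed_subset hOcompact hO1closed (fun p hp => hp.1)
  obtain ⟨pf, hpfO1, hpfmax⟩ := hO1compact.exists_isMaxOn ⟨q1, ⟨hq1O, rfl⟩⟩
    (dbm_cont_f2.continuousOn)
  refine ⟨pf.1, pf.2, hpfO1.1.1.1, ?_, ?_⟩
  · intro x' z' h
    have h1 := hminAll x' z' h
    have h2 : DualBMatchObj b pf.1 pf.2 = m := hpfO1.1.2
    linarith
  · intro A B hA hB
    by_contra hcontra
    push_neg at hcontra
    obtain ⟨hnAB, hnBA, hne⟩ := hcontra
    obtain ⟨⟨⟨hfeas, hcheap⟩, hobjm⟩, hf1⟩ := hpfO1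
    have hmono : ∀ U W : Finset V, U ⊆ W → (∑ i ∈ U, b i) ≤ ∑ i ∈ W, b i :=
      fun U W h => Finset.sum_le_sum_of_subset_of_nonneg h
        (fun v _ _ => le_trans zero_le_one (hb v))
    have hcardle : ∀ U : Finset V, (U.card : ℤ) ≤ ∑ i ∈ U, b i := by
      intro U
      calc (U.card : ℤ) = ∑ _i ∈ U, (1:ℤ) := by simp
        _ ≤ ∑ i ∈ U, b i := Finset.sum_le_sum fun i _ => hb i
    have hAodd : Odd (∑ i ∈ A, b i) := by
      by_contra h; rw [hfeas.2.2.1 A h] at hA; exact lt_irrefl 0 hA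
    have hBodd : Odd (∑ i ∈ B, b i) := by
      by_contra h; rw [hfeas.2.2.1 B h] at hB; exact lt_irrefl 0 hB
    have hA1 : (∑ i ∈ A, b i) ≠ 1 := fun h => by
      rw [hcheap A h] at hA; exact lt_irrefl 0 hA
    have hB1 : (∑ i ∈ B, b i) ≠ 1 := fun h => by
      rw [hcheap B h] at hB; exact lt_irrefl 0 hB
    have hIne : (A ∩ B).Nonempty := hne
    have hABne : A ≠ B := fun h => hnAB (by rw [h])
    have hInotA : A ∩ B ≠ A := fun h => hnAB (Finset.inter_eq_left.1 h)
    have hInotB : A ∩ B ≠ B := fun h => hnBA (Finset.inter_eq_right.1 h)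
    have hUnotA : A ∪ B ≠ A := fun h => hnBA (Finset.union_eq_left.1 h)
    have hUnotB : A ∪ B ≠ B := fun h => hnAB (Finset.union_eq_right.1 h)
    have hsumUI : (∑ i ∈ A ∪ B, b i) + ∑ i ∈ A ∩ B, b i
        = (∑ i ∈ A, b i) + ∑ i ∈ B, b i := Finset.sum_union_inter
    have hoA := Int.odd_iff.1 hAodd
    have hoB := Int.odd_iff.1 hBodd
    have h0A : (0:ℤ) ≤ ∑ i ∈ A, b i :=
      Finset.sum_nonneg fun i _ => le_trans zero_le_one (hb i)
    have h0B : (0:ℤ) ≤ ∑ i ∈ B, b i :=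
      Finset.sum_nonneg fun i _ => le_trans zero_le_one (hb i)
    have hsA3 : 3 ≤ ∑ i ∈ A, b i := by omega
    have hsB3 : 3 ≤ ∑ i ∈ B, b i := by omega
    have hIcard1 : 1 ≤ (A ∩ B).card := Finset.card_pos.2 hIne
    have hsI1 : (1:ℤ) ≤ ∑ i ∈ A ∩ B, b i := le_trans (by exact_mod_cast hIcard1) (hcardle _)
    have hsAU : (∑ i ∈ A, b i) ≤ ∑ i ∈ A ∪ B, b i := hmono _ _ Finset.subset_union_left
    have hsIA : (∑ i ∈ A ∩ B, b i) ≤ ∑ i ∈ A, b i := hmono _ _ Finset.inter_subset_left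
    set ε := min (pf.2 A) (pf.2 B) with hepsdef
    have heps : 0 < ε := lt_min hA hB
    have hepsA : ε ≤ pf.2 A := min_le_left _ _
    have hepsB : ε ≤ pf.2 B := min_le_right _ _
    have hcardIU : (A ∩ B).card + (A ∪ B).card = A.card + B.card :=
      Finset.card_inter_add_card_union A B
    have hIltA : (A ∩ B).card < A.card :=
      Finset.card_lt_card (Finset.inter_subset_left.ssubset_of_ne hInotA)
    have hAltU : A.card < (A ∪ B).card :=
      Finset.card_lt_card (Finset.subset_union_left.ssubset_of_ne (Ne.symm hUnotA))
    by_cases hIodd : Odd (∑ i ∈ A ∩ B, b i)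
    · -- odd intersection: uncross to A ∩ B and A ∪ B, then kill cheap coordinates
      have hoI := Int.odd_iff.1 hIodd
      have hUodd : Odd (∑ i ∈ A ∪ B, b i) := Int.odd_iff.2 (by omega)
      obtain ⟨hfeas', hobj', hf1', hf2'⟩ := dbm_perturb G w b pf.1 pf.2 hfeas
        A B (A ∩ B) (A ∪ B) ∅ ε heps hepsA hepsB hABne
        (fun h => hInotA h.symm) (fun h => hUnotA h.symm)
        (fun h => hInotB h.symm) (fun h => hUnotB h.symm) hIodd hUodd
        (by
          intro i j _
          simp only [Finset.mem_union, Finset.mem_inter, Finset.notMem_empty, if_false]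
          by_cases hiA : i ∈ A <;> by_cases hjA : j ∈ A <;> by_cases hiB : i ∈ B <;>
            by_cases hjB : j ∈ B <;> simp [hiA, hjA, hiB, hjB] <;> norm_num)
        (by simp only [Finset.sum_empty]; omega)
      obtain ⟨hfeas'', hobj''⟩ := dbm_proj G w b hb _ _ hfeas'
      have hq''O1 : ((fun v => pf.1 v + ε * (if v ∈ (∅ : Finset V) then (1:ℝ) else 0),
          fun U => if (∑ i ∈ U, b i) = 1 then 0 else
            pf.2 U + ε * ((if U = A ∩ B then (1:ℝ) else 0) + (if U = A ∪ B then 1 else 0)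
              - (if U = A then 1 else 0) - (if U = B then 1 else 0))) : P) ∈ O1 := by
        refine ⟨⟨⟨hfeas'', fun U hU => ?_⟩, ?_⟩, ?_⟩
        · show (if (∑ i ∈ U, b i) = 1 then (0:ℝ) else _) = 0
          rw [if_pos hU]
        · exact hobj''.trans (hobj'.trans hobjm)
        · show (∑ i, (b i : ℝ) * (pf.1 i + ε * (if i ∈ (∅ : Finset V) then (1:ℝ) else 0)))
            = ∑ i, (b i : ℝ) * q1.1 i
          rw [hf1']
          simp only [Finset.sum_empty, mul_zero, add_zero]
          exact hf1
      have hmax := isMaxOn_iff.1 hpfmax _ hq''O1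
      dsimp only at hmax
      have hproj2 := dbm_proj_f2 b hb
        (fun U => pf.2 U + ε * ((if U = A ∩ B then (1:ℝ) else 0) + (if U = A ∪ B then 1 else 0)
          - (if U = A then 1 else 0) - (if U = B then 1 else 0)))
      beta_reduce at hproj2
      rw [hproj2, hf2'] at hmax
      have hΔ : (0:ℝ) < (((A ∩ B).card : ℝ)^2 - 1) + (((A ∪ B).card : ℝ)^2 - 1)
          - ((A.card : ℝ)^2 - 1) - ((B.card : ℝ)^2 - 1) := by
        have hcR : ((A ∩ B).card : ℝ) + ((A ∪ B).card : ℝ)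
            = (A.card : ℝ) + (B.card : ℝ) := by exact_mod_cast hcardIU
        have hIA : ((A ∩ B).card : ℝ) < (A.card : ℝ) := by exact_mod_cast hIltA
        have hAU : ((A.card : ℝ)) < ((A ∪ B).card : ℝ) := by exact_mod_cast hAltU
        nlinarith [mul_pos (sub_pos.2 hIA) (sub_pos.2 hAU)]
      nlinarith [mul_pos heps hΔ]
    · -- even intersection: uncross to A \ B, B \ A, and push onto x on A ∩ B
      have hoI := Int.even_iff.1 (Int.not_odd_iff_even.1 hIodd)
      have hsABd : (∑ i ∈ A \ B, b i) = (∑ i ∈ A, b i) - ∑ i ∈ A ∩ B, b i := by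
        rw [← Finset.sdiff_inter_self_left A B]
        exact Finset.sum_sdiff_eq_sub Finset.inter_subset_left
      have hsBAd : (∑ i ∈ B \ A, b i) = (∑ i ∈ B, b i) - ∑ i ∈ A ∩ B, b i := by
        rw [← Finset.sdiff_inter_self_left B A, Finset.inter_comm B A]
        exact Finset.sum_sdiff_eq_sub Finset.inter_subset_right
      have hCodd : Odd (∑ i ∈ A \ B, b i) := Int.odd_iff.2 (by omega)
      have hDodd : Odd (∑ i ∈ B \ A, b i) := Int.odd_iff.2 (by omega)
      obtain ⟨v0, hv0⟩ := hIne
      have hv0A : v0 ∈ A := (Finset.mem_inter.1 hv0).1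
      have hv0B : v0 ∈ B := (Finset.mem_inter.1 hv0).2
      have hAC : A ≠ A \ B := fun h => (Finset.mem_sdiff.1 (h ▸ hv0A)).2 hv0B
      have hAD : A ≠ B \ A := fun h => (Finset.mem_sdiff.1 (h ▸ hv0A)).2 hv0A
      have hBC : B ≠ A \ B := fun h => (Finset.mem_sdiff.1 (h ▸ hv0B)).2 hv0B
      have hBD : B ≠ B \ A := fun h => (Finset.mem_sdiff.1 (h ▸ hv0B)).2 hv0A
      obtain ⟨hfeas', hobj', hf1', hf2'⟩ := dbm_perturb G w b pf.1 pf.2 hfeas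
        A B (A \ B) (B \ A) (A ∩ B) ε heps hepsA hepsB hABne hAC hAD hBC hBD hCodd hDodd
        (by
          intro i j _
          simp only [Finset.mem_sdiff, Finset.mem_inter]
          by_cases hiA : i ∈ A <;> by_cases hjA : j ∈ A <;> by_cases hiB : i ∈ B <;>
            by_cases hjB : j ∈ B <;> simp [hiA, hjA, hiB, hjB] <;> norm_num)
        (by omega)
      obtain ⟨hfeas'', hobj''⟩ := dbm_proj G w b hb _ _ hfeas'
      have hq''O : ((fun v => pf.1 v + ε * (if v ∈ A ∩ B then (1:ℝ) else 0),
          fun U => if (∑ i ∈ U, b i) = 1 then 0 else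
            pf.2 U + ε * ((if U = A \ B then (1:ℝ) else 0) + (if U = B \ A then 1 else 0)
              - (if U = A then 1 else 0) - (if U = B then 1 else 0))) : P) ∈ O := by
        refine ⟨⟨hfeas'', fun U hU => ?_⟩, ?_⟩
        · show (if (∑ i ∈ U, b i) = 1 then (0:ℝ) else _) = 0
          rw [if_pos hU]
        · exact hobj''.trans (hobj'.trans hobjm)
      have hmax := isMaxOn_iff.1 hq1max _ hq''O
      dsimp only at hmax
      rw [hf1'] at hmax
      have hsIR : (1:ℝ) ≤ ∑ v ∈ A ∩ B, (b v : ℝ) := by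
        have : ((1:ℤ) : ℝ) ≤ ((∑ v ∈ A ∩ B, b v : ℤ) : ℝ) := by exact_mod_cast hsI1
        push_cast at this
        linarith
      have hlt : 0 < ε * ∑ v ∈ A ∩ B, (b v : ℝ) :=
        mul_pos heps (by linarith)
      rw [hf1] at hmax
      linarith
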